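/- If the doubled graphs G̃ and G̃' of two graphs G and G' on n vertices are isomorphic, then G and G' are switching equivalent. -/

import Mathlib

open SimpleGraph

/-- `c` is an `n`-rainbow coloring of `G`: every color appears exactly once in the
open neighborhood of each vertex. -/
def IsRainbow {V : Type*} {n : ℕ} (G : SimpleGraph V) (c : V → Fin n) : Prop :=
  ∀ v : V, ∀ i : Fin n, ∃! w : V, G.Adj v w ∧ c w = i

/-- Switching `G` at the vertex `v`: reverse the adjacency between `v` and all other
vertices. -/
def switch {V : Type*} (G : SimpleGraph V) (v : V) : SimpleGraph V :=
  SimpleGraph.fromRel (fun x y => Xor' (G.Adj x y) (x = v ∨ y = v))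

/-- The double `G̃` of `G`: vertices `inl i` (= `i`) and `inr i` (= `i'`), with edges
`(i,i')`; `(i,j)` and `(i',j')` for edges `(i,j)` of `G`; and `(i,j')`, `(i',j)` for
non-edges `i ≠ j` of `G`. -/
def double {V : Type*} (G : SimpleGraph V) : SimpleGraph (V ⊕ V) :=
  SimpleGraph.fromRel (fun x y =>
    match x, y with
    | .inl i, .inl j => G.Adj i j
    | .inr i, .inr j => G.Adj i j
    | .inl i, .inr j => i = j ∨ ¬ G.Adj i j
    | .inr i, .inl j => i = j ∨ ¬ G.Adj i j)

open Classical in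
/-- The Seidel matrix of `G`: zero diagonal, `1` for edges, `-1` for non-edges. -/
noncomputable def seidel {V : Type*} (G : SimpleGraph V) : Matrix V V ℝ :=
  fun i j => if i = j then 0 else if G.Adj i j then 1 else -1

/-- A Seidel matrix: symmetric, zero diagonal, off-diagonal entries `±1`. -/
def IsSeidel {m : Type*} (A : Matrix m m ℝ) : Prop :=
  A.IsSymm ∧ (∀ i, A i i = 0) ∧ ∀ i j, i ≠ j → A i j = 1 ∨ A i j = -1

/-- A permutation matrix. -/
def IsPermMatrix {m : Type*} [DecidableEq m] (P : Matrix m m ℝ) : Prop :=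
  ∃ σ : Equiv.Perm m, P = σ.permMatrix ℝ

/-- A line (row or column) with exactly one nonzero entry, equal to `±1`. -/
def SignedPermLine {m : Type*} (r : m → ℝ) : Prop :=
  ∃ j, (r j = 1 ∨ r j = -1) ∧ ∀ k, k ≠ j → r k = 0

/-- A line with either exactly one nonzero entry `±1`, or exactly two nonzero entries,
each `±1/2`. -/
def HalfLine {m : Type*} (r : m → ℝ) : Prop :=
  SignedPermLine r ∨
    ∃ j k, j ≠ k ∧ (r j = 1/2 ∨ r j = -1/2) ∧ (r k = 1/2 ∨ r k = -1/2) ∧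
      ∀ l, l ≠ j → l ≠ k → r l = 0

/-- A signed permutation matrix: exactly one nonzero entry, `±1`, in every row and column. -/
def IsSignedPermMatrix {m : Type*} (Q : Matrix m m ℝ) : Prop :=
  (∀ i, SignedPermLine (Q i)) ∧ (∀ j, SignedPermLine (fun i => Q i j))

/-- A signed half-permutation matrix. -/
def IsSignedHalfPermMatrix {m : Type*} (S : Matrix m m ℝ) : Prop :=
  (∀ i, HalfLine (S i)) ∧ (∀ j, HalfLine (fun i => S i j))

/-- `T` is an integration of the signed half-permutation matrix `S`. -/
def IsIntegration {m : Type*} (T S : Matrix m m ℝ) : Prop :=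
  IsSignedPermMatrix T ∧
    ∀ i j, ((S i j = 1 ∨ S i j = -1) → T i j = S i j) ∧
      ((S i j = 1/2 ∨ S i j = -1/2) → T i j = 2 * S i j ∨ T i j = 0) ∧
      (S i j = 0 → T i j = 0)

/-- Labeled switching equivalence: a sequence of switchings transforms `G` into `G'`. -/
def SwitchEquiv {V : Type*} (G G' : SimpleGraph V) : Prop :=
  Relation.ReflTransGen (fun H H' => ∃ v, H' = switch H v) G G'

/-- Switching equivalence allowing relabeling. -/
def SwitchEquivIso {V : Type*} (G G' : SimpleGraph V) : Prop :=
  ∃ H, SwitchEquiv G H ∧ Nonempty (H ≃g G')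

/-- The subgraph of `G` consisting of all edges whose endpoints get the same color. -/
def sameColorSubgraph {V : Type*} {n : ℕ} (G : SimpleGraph V) (c : V → Fin n) :
    G.Subgraph where
  verts := Set.univ
  Adj a b := G.Adj a b ∧ c a = c b
  adj_sub h := h.1
  edge_vert _ := Set.mem_univ _
  symm := ⟨fun a b h => ⟨h.1.symm, h.2.symm⟩⟩

/-- The `2n × 2n` block matrix `M̃ = [[M, I−M],[I−M, M]]`. -/
def tildeMat {n : ℕ} (M : Matrix (Fin n) (Fin n) ℝ) :
    Matrix (Fin n ⊕ Fin n) (Fin n ⊕ Fin n) ℝ :=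
  Matrix.fromBlocks M (1 - M) (1 - M) M


-- ## Auxiliary machinery

theorem exists_antiinv {X : Type*} (u v : Equiv.Perm X)
    (hu1 : ∀ x, u (u x) = x) (hu2 : ∀ x, u x ≠ x)
    (hv1 : ∀ x, v (v x) = x) (hv2 : ∀ x, v x ≠ x) :
    ∃ b : X → Prop, (∀ x, b (u x) ↔ ¬ b x) ∧ (∀ x, b (v x) ↔ ¬ b x) := by
  classical
  set σ : Equiv.Perm X := u * v with hσdef
  have huu : u * u = 1 := by ext x; simp [hu1 x]
  have hvv : v * v = 1 := by ext x; simp [hv1 x]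
  have hui : u⁻¹ = u := inv_eq_of_mul_eq_one_right huu
  have hvi : v⁻¹ = v := inv_eq_of_mul_eq_one_right hvv
  have hcon : u * σ * u⁻¹ = σ⁻¹ := by
    rw [hσdef, mul_inv_rev, hui, hvi, ← mul_assoc, huu, one_mul]
  have hconk : ∀ k : ℤ, u * σ ^ k * u⁻¹ = σ ^ (-k) := by
    intro k
    rw [← conj_zpow, hcon, inv_zpow, zpow_neg]
  have hkey : ∀ (k : ℤ) (x : X), u ((σ ^ k) x) = (σ ^ (-k)) (u x) := by
    intro k x
    have := congrFun (congrArg (fun (e : Equiv.Perm X) => (e : X → X)) (hconk k)) (u x)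
    simpa [Equiv.Perm.mul_apply, hui, hu1] using this
  have hA : ∀ x : X, ¬ σ.SameCycle x (u x) := by
    rintro x ⟨k, hk⟩
    rcases Int.even_or_odd k with ⟨s, hs⟩ | ⟨s, hs⟩
    · apply hu2 ((σ ^ s) x)
      rw [hkey s x, ← hk, hs, ← Equiv.Perm.mul_apply, ← zpow_add]
      congr 2
      ring
    · apply hv2 ((σ ^ s) x)
      have h1 : u ((σ ^ s) x) = σ ((σ ^ s) x) := by
        rw [hkey s x, ← hk, hs, ← Equiv.Perm.mul_apply, ← zpow_add]
        have h2 : -s + (2 * s + 1) = 1 + s := by ring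
        rw [h2, zpow_one_add, Equiv.Perm.mul_apply]
      have h2 : u (v ((σ ^ s) x)) = u ((σ ^ s) x) := by
        rw [← Equiv.Perm.mul_apply, ← hσdef, ← h1]
      exact u.injective h2
  -- symmetry of SameCycle under u
  have hB : ∀ a c : X, σ.SameCycle a c → σ.SameCycle (u a) (u c) := by
    rintro a c ⟨k, hk⟩
    exact ⟨-k, by rw [← hk, ← hkey]⟩
  have hB' : ∀ a c : X, σ.SameCycle a c ↔ σ.SameCycle (u a) (u c) := by
    intro a c
    refine ⟨hB a c, fun h => ?_⟩
    have := hB _ _ h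
    rwa [hu1, hu1] at this
  -- the setoid
  let r : X → X → Prop := fun a c => σ.SameCycle a c ∨ σ.SameCycle a (u c)
  have requiv : Equivalence r := by
    constructor
    · intro a; exact Or.inl (Equiv.Perm.SameCycle.refl σ a)
    · rintro a c (h | h)
      · exact Or.inl h.symm
      · have := hB _ _ h
        rw [hu1] at this
        exact Or.inr this.symm
    · rintro a c e (h1 | h1) (h2 | h2)
      · exact Or.inl (h1.trans h2)
      · exact Or.inr (h1.trans h2)
      · exact Or.inr (h1.trans (hB _ _ h2))
      · have := hB _ _ h2
        rw [hu1] at this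
        exact Or.inl (h1.trans this)
  letI st : Setoid X := ⟨r, requiv⟩
  let rep : X → X := fun x => (⟦x⟧ : Quotient st).out
  have hrx : ∀ x, r (rep x) x := fun x => Quotient.mk_out x
  have hrepeq : ∀ x y, r x y → rep x = rep y := by
    intro x y h
    show (⟦x⟧ : Quotient st).out = (⟦y⟧ : Quotient st).out
    rw [Quotient.sound h]
  have hexcl : ∀ x, ¬(σ.SameCycle (rep x) x ∧ σ.SameCycle (rep x) (u x)) := by
    rintro x ⟨h1, h2⟩
    exact hA x (h1.symm.trans h2)
  refine ⟨fun x => σ.SameCycle (rep x) (u x), ?_, ?_⟩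
  · intro x
    have hxu : r x (u x) := Or.inr (by rw [hu1])
    have hr : rep (u x) = rep x := (hrepeq x (u x) hxu).symm
    show σ.SameCycle (rep (u x)) (u (u x)) ↔ ¬ σ.SameCycle (rep x) (u x)
    rw [hr, hu1]
    constructor
    · intro h1 h2
      exact hexcl x ⟨h1, h2⟩
    · intro h2
      rcases hrx x with h | h
      · exact h
      · exact absurd h h2
  · intro x
    have hxv : r x (v x) := Or.inr ⟨1, by rw [zpow_one, hσdef]; rfl⟩
    have hr : rep (v x) = rep x := (hrepeq x (v x) hxv).symm
    have huv : u (v x) = σ x := by rw [hσdef]; rfl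
    show σ.SameCycle (rep (v x)) (u (v x)) ↔ ¬ σ.SameCycle (rep x) (u x)
    rw [hr, huv]
    have hstep : σ.SameCycle (rep x) (σ x) ↔ σ.SameCycle (rep x) x :=
      ⟨fun h => h.trans ⟨-1, by simp⟩, fun h => h.trans ⟨1, rfl⟩⟩
    rw [hstep]
    constructor
    · intro h1 h2
      exact hexcl x ⟨h1, h2⟩
    · intro h2
      rcases hrx x with h | h
      · exact h
      · exact absurd h h2



def switchSet {V : Type*} (G : SimpleGraph V) (s : V → Prop) : SimpleGraph V where
  Adj x y := x ≠ y ∧ (G.Adj x y ↔ (s x ↔ s y))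
  symm := ⟨fun x y h => ⟨Ne.symm h.1, by rw [G.adj_comm]; exact h.2.trans (by tauto)⟩⟩
  loopless := ⟨fun x h => h.1 rfl⟩

theorem switchSet_adj {V : Type*} (G : SimpleGraph V) (s : V → Prop) (x y : V) :
    (switchSet G s).Adj x y ↔ x ≠ y ∧ (G.Adj x y ↔ (s x ↔ s y)) := Iff.rfl

theorem switch_adj {V : Type*} (G : SimpleGraph V) (v x y : V) :
    (switch G v).Adj x y ↔ x ≠ y ∧ Xor' (G.Adj x y) (x = v ∨ y = v) := by
  rw [switch, fromRel_adj]
  constructor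
  · rintro ⟨h1, h2 | h2⟩
    · exact ⟨h1, h2⟩
    · refine ⟨h1, ?_⟩
      rw [G.adj_comm] at h2
      unfold Xor' Xor at h2 ⊢
      tauto
  · rintro ⟨h1, h2⟩
    exact ⟨h1, Or.inl h2⟩

theorem switchSet_congr {V : Type*} (G : SimpleGraph V) (s t : V → Prop)
    (h : ∀ x, s x ↔ t x) : switchSet G s = switchSet G t := by
  ext x y
  rw [switchSet_adj, switchSet_adj, h, h]

theorem switchSet_empty {V : Type*} (G : SimpleGraph V) :
    switchSet G (fun _ => False) = G := by
  ext x y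
  rw [switchSet_adj]
  simp only [false_iff, iff_true, not_false_iff, iff_self]
  constructor
  · tauto
  · intro h; exact ⟨G.ne_of_adj h, by tauto⟩

theorem switchSet_insert {V : Type*} [DecidableEq V] (G : SimpleGraph V) (F : Finset V)
    (a : V) (ha : a ∉ F) :
    switchSet G (· ∈ insert a F) = switch (switchSet G (· ∈ F)) a := by
  ext x y
  rw [switchSet_adj, switch_adj, switchSet_adj]
  constructor
  · rintro ⟨hxy, h⟩
    refine ⟨hxy, ?_⟩
    unfold Xor' Xor
    by_cases hx : x = a <;> by_cases hy : y = a <;>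
      simp_all [Finset.mem_insert] <;> tauto
  · rintro ⟨hxy, h⟩
    refine ⟨hxy, ?_⟩
    unfold Xor' Xor at h
    by_cases hx : x = a <;> by_cases hy : y = a <;>
      simp_all [Finset.mem_insert] <;> tauto

theorem switchEquiv_switchSet_finset {V : Type*} [DecidableEq V] (G : SimpleGraph V)
    (F : Finset V) : SwitchEquiv G (switchSet G (· ∈ F)) := by
  induction F using Finset.induction_on with
  | empty =>
      have : switchSet G (· ∈ (∅ : Finset V)) = G := by
        rw [switchSet_congr G _ (fun _ => False) (by simp), switchSet_empty]
      rw [this]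
      exact Relation.ReflTransGen.refl
  | insert a F ha ih =>
      rw [switchSet_insert G F a ha]
      exact Relation.ReflTransGen.tail ih ⟨a, rfl⟩

theorem switchEquiv_switchSet {V : Type*} [Fintype V] [DecidableEq V] (G : SimpleGraph V)
    (s : V → Prop) : SwitchEquiv G (switchSet G s) := by
  classical
  have : switchSet G s = switchSet G (· ∈ Finset.univ.filter s) := by
    apply switchSet_congr
    intro x; simp
  rw [this]
  exact switchEquiv_switchSet_finset G _


theorem switch_switch {V : Type*} (G : SimpleGraph V) (v : V) :
    switch (switch G v) v = G := by
  ext x y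
  rw [switch_adj, switch_adj]
  constructor
  · rintro ⟨h1, h2⟩; unfold Xor' Xor at h2; tauto
  · intro h
    have h1 := G.ne_of_adj h
    refine ⟨h1, ?_⟩
    unfold Xor' Xor
    tauto

theorem switchEquiv_symm {V : Type*} {G H : SimpleGraph V} (h : SwitchEquiv G H) :
    SwitchEquiv H G := by
  have hsym : Symmetric (fun (H H' : SimpleGraph V) => ∃ v, H' = switch H v) := by
    rintro A B ⟨v, rfl⟩
    exact ⟨v, (switch_switch A v).symm⟩
  exact (@Relation.ReflTransGen.stdSymm _ _ ⟨hsym⟩).symm _ _ h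

def switchIso {V W : Type*} {H : SimpleGraph V} {K : SimpleGraph W} (e : H ≃g K) (v : V) :
    switch H v ≃g switch K (e v) where
  toEquiv := e.toEquiv
  map_rel_iff' := by
    intro x y
    show (switch K (e v)).Adj (e x) (e y) ↔ (switch H v).Adj x y
    rw [switch_adj, switch_adj]
    have h1 : (e x : W) ≠ e y ↔ x ≠ y := by simp
    have h2 : K.Adj (e x) (e y) ↔ H.Adj x y := e.map_adj_iff
    have h3 : (e x : W) = e v ↔ x = v := by
      constructor
      · intro h; exact e.toEquiv.injective h
      · rintro rfl; rfl
    have h4 : (e y : W) = e v ↔ y = v := by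
      constructor
      · intro h; exact e.toEquiv.injective h
      · rintro rfl; rfl
    rw [h1, h2, h3, h4]

theorem switchEquiv_transport {V W : Type*} {K K' : SimpleGraph W}
    (h : SwitchEquiv K K') : ∀ (H : SimpleGraph V), (H ≃g K) →
    ∃ H', SwitchEquiv H H' ∧ Nonempty (H' ≃g K') := by
  induction h with
  | refl => exact fun H e => ⟨H, Relation.ReflTransGen.refl, ⟨e⟩⟩
  | tail hKB hstep ih =>
      intro H e
      obtain ⟨H1, hH1, ⟨e1⟩⟩ := ih H e
      obtain ⟨w, rfl⟩ := hstep
      refine ⟨switch H1 (e1.symm w), Relation.ReflTransGen.tail hH1 ⟨e1.symm w, rfl⟩, ?_⟩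
      have := switchIso e1 (e1.symm w)
      rw [RelIso.apply_symm_apply] at this
      exact ⟨this⟩

theorem double_adj' {V : Type*} (G : SimpleGraph V) (x y : V ⊕ V)
    (h : Sum.elim id id x ≠ Sum.elim id id y) :
    (double G).Adj x y ↔
      (G.Adj (Sum.elim id id x) (Sum.elim id id y) ↔ x.isLeft = y.isLeft) := by
  rcases x with i | i <;> rcases y with j | j <;>
    simp only [Sum.elim_inl, Sum.elim_inr, id_eq] at h ⊢ <;>
    rw [double, SimpleGraph.fromRel_adj] <;>
    simp only [Sum.isLeft_inl, Sum.isLeft_inr, ne_eq, Sum.inl.injEq, Sum.inr.injEq,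
      reduceCtorEq, not_false_eq_true, true_and]
  · constructor
    · rintro ⟨_, h2 | h2⟩
      · simp [h2]
      · simp [h2.symm]
    · intro h2
      exact ⟨h, Or.inl (by simpa using h2)⟩
  · have : ¬ i = j := h
    simp only [this, false_or]
    rw [G.adj_comm j i]
    tauto
  · have : ¬ i = j := h
    simp only [this, false_or]
    rw [G.adj_comm j i]
    tauto
  · constructor
    · rintro ⟨_, h2 | h2⟩
      · simp [h2]
      · simp [h2.symm]
    · intro h2
      exact ⟨h, Or.inl (by simpa using h2)⟩

theorem main_iso {n : ℕ} (G G' : SimpleGraph (Fin n)) (φ : double G ≃g double G') :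
    ∃ (s s' : Fin n → Prop), Nonempty (switchSet G s ≃g switchSet G' s') := by
  classical
  let u : Equiv.Perm (Fin n ⊕ Fin n) := Equiv.sumComm (Fin n) (Fin n)
  let m : Equiv.Perm (Fin n ⊕ Fin n) :=
    φ.toEquiv.trans ((u : Fin n ⊕ Fin n ≃ Fin n ⊕ Fin n).trans φ.toEquiv.symm)
  have hmdef : ∀ x, m x = φ.symm (u (φ x)) := fun x => rfl
  have hu1 : ∀ x : Fin n ⊕ Fin n, u (u x) = x := fun x => by cases x <;> rfl
  have hu2 : ∀ x : Fin n ⊕ Fin n, u x ≠ x := fun x => by cases x <;> simp [u]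
  have hm1 : ∀ x, m (m x) = x := by
    intro x
    rw [hmdef, hmdef]
    simp [hu1]
  have hm2 : ∀ x, m x ≠ x := by
    intro x hx
    rw [hmdef] at hx
    apply hu2 (φ x)
    have := congrArg (fun z => φ z) hx
    simpa using this
  obtain ⟨b, hbu, hbm⟩ := exists_antiinv u m hu1 hu2 hm1 hm2
  let s : Fin n → Prop := fun i => b (Sum.inr i)
  let s' : Fin n → Prop := fun a => b (φ.symm (Sum.inr a))
  let c : Fin n → Fin n ⊕ Fin n := fun i => if s i then Sum.inr i else Sum.inl i
  let c' : Fin n → Fin n ⊕ Fin n := fun a => if s' a then Sum.inr a else Sum.inl a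
  let p : Fin n ⊕ Fin n → Fin n := Sum.elim id id
  have hbc : ∀ i, b (c i) := by
    intro i
    by_cases h : s i
    · simp only [c, if_pos h]; exact h
    · have : b (u (Sum.inl i)) ↔ ¬ b (Sum.inl i) := hbu (Sum.inl i)
      simp only [c, h, if_false]
      have hui : u (Sum.inl i) = Sum.inr i := rfl
      rw [hui] at this
      by_contra hb
      exact h (by simpa [s] using this.mpr hb)
  have hpc : ∀ i, p (c i) = i := by
    intro i; by_cases h : s i <;> simp [c, p, h]
  have hpc' : ∀ a, p (c' a) = a := by
    intro a; by_cases h : s' a <;> simp [c', p, h]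
  have hLc : ∀ i, (c i).isLeft = true ↔ ¬ s i := by
    intro i; by_cases h : s i <;> simp [c, h]
  have hLc' : ∀ a, (c' a).isLeft = true ↔ ¬ s' a := by
    intro a; by_cases h : s' a <;> simp [c', h]
  -- images
  have hchosen' : ∀ z : Fin n ⊕ Fin n, b (φ.symm z) → c' (p z) = z := by
    rintro (a | a) hz
    · have hm' : m (φ.symm (Sum.inl a)) = φ.symm (Sum.inr a) := by
        rw [hmdef]
        simp [u]
      have : ¬ b (φ.symm (Sum.inr a)) := by
        rw [← hm']
        rw [hbm]
        simpa using hz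
      simp only [c', p, Sum.elim_inl, id_eq]
      simp only [s', this, if_false]
    · show c' a = Sum.inr a
      exact if_pos hz
  let π : Fin n → Fin n := fun i => p (φ (c i))
  have hφc : ∀ i, c' (π i) = φ (c i) := by
    intro i
    apply hchosen'
    rw [RelIso.symm_apply_apply]
    exact hbc i
  have hinj : Function.Injective π := by
    intro i j hij
    have : φ (c i) = φ (c j) := by rw [← hφc, ← hφc, hij]
    have hc : c i = c j := φ.toEquiv.injective (by exact_mod_cast this)
    rw [← hpc i, ← hpc j, hc]
  -- adjacency characterizations
  have hside : ∀ (i j : Fin n), ((c i).isLeft = (c j).isLeft) ↔ (s i ↔ s j) := by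
    intro i j
    by_cases hi : s i <;> by_cases hj : s j <;> simp [c, hi, hj]
  have hside' : ∀ (a d : Fin n), ((c' a).isLeft = (c' d).isLeft) ↔ (s' a ↔ s' d) := by
    intro a d
    by_cases hi : s' a <;> by_cases hj : s' d <;> simp [c', hi, hj]
  have hG1adj : ∀ i j, (switchSet G s).Adj i j ↔ i ≠ j ∧ (double G).Adj (c i) (c j) := by
    intro i j
    rw [switchSet_adj]
    constructor
    · rintro ⟨hij, hadj⟩
      refine ⟨hij, ?_⟩
      rw [double_adj' G (c i) (c j) (by rw [show Sum.elim id id (c i) = p (c i) from rfl, show Sum.elim id id (c j) = p (c j) from rfl, hpc, hpc]; exact hij)]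
      rw [show Sum.elim id id (c i) = p (c i) from rfl, show Sum.elim id id (c j) = p (c j) from rfl, hpc, hpc, hside]
      exact hadj
    · rintro ⟨hij, hadj⟩
      refine ⟨hij, ?_⟩
      rw [double_adj' G (c i) (c j) (by rw [show Sum.elim id id (c i) = p (c i) from rfl, show Sum.elim id id (c j) = p (c j) from rfl, hpc, hpc]; exact hij)] at hadj
      rw [show Sum.elim id id (c i) = p (c i) from rfl, show Sum.elim id id (c j) = p (c j) from rfl, hpc, hpc, hside] at hadj
      exact hadj
  have hG2adj : ∀ a d, (switchSet G' s').Adj a d ↔ a ≠ d ∧ (double G').Adj (c' a) (c' d) := by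
    intro a d
    rw [switchSet_adj]
    constructor
    · rintro ⟨hij, hadj⟩
      refine ⟨hij, ?_⟩
      rw [double_adj' G' (c' a) (c' d) (by rw [show Sum.elim id id (c' a) = p (c' a) from rfl, show Sum.elim id id (c' d) = p (c' d) from rfl, hpc', hpc']; exact hij)]
      rw [show Sum.elim id id (c' a) = p (c' a) from rfl, show Sum.elim id id (c' d) = p (c' d) from rfl, hpc', hpc', hside']
      exact hadj
    · rintro ⟨hij, hadj⟩
      refine ⟨hij, ?_⟩
      rw [double_adj' G' (c' a) (c' d) (by rw [show Sum.elim id id (c' a) = p (c' a) from rfl, show Sum.elim id id (c' d) = p (c' d) from rfl, hpc', hpc']; exact hij)] at hadj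
      rw [show Sum.elim id id (c' a) = p (c' a) from rfl, show Sum.elim id id (c' d) = p (c' d) from rfl, hpc', hpc', hside'] at hadj
      exact hadj
  refine ⟨s, s', ⟨?_⟩⟩
  refine ⟨Equiv.ofBijective π (Finite.injective_iff_bijective.mp hinj), ?_⟩
  intro i j
  show (switchSet G' s').Adj (π i) (π j) ↔ (switchSet G s).Adj i j
  rw [hG2adj, hG1adj, hφc, hφc]
  have h1 : (π i ≠ π j) ↔ (i ≠ j) := hinj.ne_iff
  rw [h1]
  have h2 : (double G').Adj (φ (c i)) (φ (c j)) ↔ (double G).Adj (c i) (c j) := φ.map_adj_iff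
  rw [h2]

/-- graphs with isomorphic doubles are switching equivalent. -/
theorem double_iso_switchEquiv {n : ℕ} (G G' : SimpleGraph (Fin n))
    (h : Nonempty (double G ≃g double G')) : SwitchEquivIso G G' := by
  obtain ⟨φ⟩ := h
  obtain ⟨s, s', ⟨e⟩⟩ := main_iso G G' φ
  have h1 : SwitchEquiv G (switchSet G s) := switchEquiv_switchSet G s
  have h2 : SwitchEquiv G' (switchSet G' s') := switchEquiv_switchSet G' s'
  obtain ⟨H', hH', hiso⟩ := switchEquiv_transport (switchEquiv_symm h2) (switchSet G s) e
  exact ⟨H', Relation.ReflTransGen.trans h1 hH', hiso⟩
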